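/- arXiv:2603.10318 — 2 statements merged into one kernel-verified Lean document; each statement's English description precedes it below -/
import Mathlib

section
/- For π-reversible P and an orbit partition of X, the KL divergence of (GPG)^l from Π is bounded by (1 − α(P̄²))^l · H(π̄), where α denotes the log-Sobolev constant and H the Shannon entropy. -/
open Finset Matrix

namespace GpgStmt

noncomputable section

variable {X : Type*}

/-- Matrix with all rows equal to π. -/
def Pimat {X : Type*} (π : X → ℝ) : Matrix X X ℝ := Matrix.of fun _ y => π y

def IsStochastic [Fintype X] (P : Matrix X X ℝ) : Prop :=
  (∀ x y, 0 ≤ P x y) ∧ ∀ x, ∑ y, P x y = 1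

/-- π-stationary transition matrix. -/
def IsStationary [Fintype X] (π : X → ℝ) (P : Matrix X X ℝ) : Prop :=
  IsStochastic P ∧ ∀ y, ∑ x, π x * P x y = π y

/-- π-reversible transition matrix. -/
def IsReversible [Fintype X] (π : X → ℝ) (P : Matrix X X ℝ) : Prop :=
  IsStochastic P ∧ ∀ x y, π x * P x y = π y * P y x

/-- mass of the orbit O_i = {x | o x = i}. -/
def orbMass [Fintype X] {k : ℕ} (π : X → ℝ) (o : X → Fin k) (i : Fin k) : ℝ :=
  ∑ x ∈ Finset.filter (fun x => o x = i) Finset.univ, π x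

/-- Gibbs kernel of the orbit partition induced by o. -/
def gibbs [Fintype X] {k : ℕ} (π : X → ℝ) (o : X → Fin k) : Matrix X X ℝ :=
  Matrix.of fun x y => if o x = o y then π y / orbMass π o (o x) else 0

/-- Projection chain P̄ of P with respect to the orbit partition induced by o. -/
def projChain [Fintype X] {k : ℕ} (π : X → ℝ) (o : X → Fin k) (P : Matrix X X ℝ) :
    Matrix (Fin k) (Fin k) ℝ :=
  Matrix.of fun i j => (1 / orbMass π o i) *
    ∑ x ∈ Finset.filter (fun x => o x = i) Finset.univ,
      ∑ y ∈ Finset.filter (fun y => o y = j) Finset.univ, π x * P x y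

/-- π-weighted KL divergence between transition matrices, with 0·log(0/a) = 0. -/
def klDiv {X : Type*} [Fintype X] (π : X → ℝ) (Q R : Matrix X X ℝ) : ℝ :=
  ∑ x, ∑ y, π x * Q x y * Real.log (Q x y / R x y)

/-- ℓ²(π)-adjoint of a matrix. -/
def piAdj [Fintype X] (π : X → ℝ) (M : Matrix X X ℝ) : Matrix X X ℝ :=
  Matrix.of fun x y => π y * M y x / π x

/-- squared π-weighted Frobenius norm ‖M‖²_{F,π} = Tr(M*M). -/
def frobSq [Fintype X] (π : X → ℝ) (M : Matrix X X ℝ) : ℝ :=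
  Matrix.trace (piAdj π M * M)

/-- π-mass of a finite set. -/
def mass [Fintype X] (π : X → ℝ) (S : Finset X) : ℝ := ∑ x ∈ S, π x

/-- Two-block Gibbs kernel G_S for the partition X = S ⊔ Sᶜ. -/
def gibbsTwo [Fintype X] [DecidableEq X] (π : X → ℝ) (S : Finset X) : Matrix X X ℝ :=
  Matrix.of fun x y =>
    if x ∈ S then (if y ∈ S then π y / mass π S else 0)
    else (if y ∈ S then 0 else π y / mass π Sᶜ)

/-- g(S) = (1/(π(S)π(S'))) Σ_{x∈S,y∈S'} π(x) P²(x,y). -/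
def gfun [Fintype X] [DecidableEq X] (π : X → ℝ) (P : Matrix X X ℝ) (S : Finset X) : ℝ :=
  (1 / (mass π S * mass π Sᶜ)) * ∑ x ∈ S, ∑ y ∈ Sᶜ, π x * (P * P) x y

/-- h(S) = (1/π(S)) Σ_{x∈S,y∈S'} π(x) P²(x,y). -/
def hfun [Fintype X] [DecidableEq X] (π : X → ℝ) (P : Matrix X X ℝ) (S : Finset X) : ℝ :=
  (1 / mass π S) * ∑ x ∈ S, ∑ y ∈ Sᶜ, π x * (P * P) x y

/-- Ergodicity (primitivity): some power of P has all entries positive. -/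
def IsErgodic [Fintype X] [DecidableEq X] (P : Matrix X X ℝ) : Prop :=
  ∃ m : ℕ, ∀ x y, 0 < (P ^ m) x y

/-- Shannon entropy of π. -/
def shannonEnt [Fintype X] (π : X → ℝ) : ℝ := -∑ x, π x * Real.log (π x)

/-- Entropy rate H_π(Q). -/
def entRate [Fintype X] (π : X → ℝ) (Q : Matrix X X ℝ) : ℝ :=
  -∑ x, ∑ y, π x * Q x y * Real.log (Q x y)

/-- Supermodular set function on 2^X. -/
def Supermodular {X : Type*} [DecidableEq X] (F : Finset X → ℝ) : Prop :=
  ∀ A B : Finset X, F A + F B ≤ F (A ∩ B) + F (A ∪ B)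

/-- Submodular set function on 2^X. -/
def Submodular {X : Type*} [DecidableEq X] (F : Finset X → ℝ) : Prop :=
  ∀ A B : Finset X, F (A ∩ B) + F (A ∪ B) ≤ F A + F B

/-- L(f) = Σ_x |f(x)|² log(|f(x)|²/‖f‖²_π) π(x). -/
def entFunc [Fintype X] (π : X → ℝ) (f : X → ℝ) : ℝ :=
  ∑ x, (f x) ^ 2 * Real.log ((f x) ^ 2 / (∑ z, (f z) ^ 2 * π z)) * π x

/-- Dirichlet form ⟨(I−Q)f, f⟩_π. -/
def dirichletForm [Fintype X] (π : X → ℝ) (Q : Matrix X X ℝ) (f : X → ℝ) : ℝ :=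
  ∑ x, (f x - ∑ y, Q x y * f y) * f x * π x

/-- log-Sobolev constant α(Q). -/
def logSobolev [Fintype X] (π : X → ℝ) (Q : Matrix X X ℝ) : ℝ :=
  sInf {r : ℝ | ∃ f : X → ℝ, entFunc π f ≠ 0 ∧ r = dirichletForm π Q f / entFunc π f}


/-! ### Auxiliary scalar inequalities -/

private lemma sub_le_mul_log' {a b : ℝ} (ha : 0 ≤ a) (hb : 0 < b) :
    a - b ≤ a * Real.log (a / b) := by
  rcases eq_or_lt_of_le ha with h | h
  · simp [← h]; linarith
  · have h1 : Real.log (b / a) ≤ b / a - 1 := Real.log_le_sub_one_of_pos (by positivity)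
    have h2 : Real.log (a / b) = - Real.log (b / a) := by
      rw [← Real.log_inv]; congr 1; field_simp
    rw [h2]
    have h3 : a * (b / a - 1) = b - a := by field_simp
    nlinarith

private lemma sqrt_ineq' {a b : ℝ} (ha : 0 ≤ a) (hb : 0 < b) :
    2*a - 2*Real.sqrt a * Real.sqrt b ≤ a * Real.log (a / b) := by
  rcases eq_or_lt_of_le ha with h | h
  · simp [← h]
  · set s := Real.sqrt a with hs
    set c := Real.sqrt b with hc
    have hs0 : 0 < s := Real.sqrt_pos.2 h
    have hc0 : 0 < c := Real.sqrt_pos.2 hb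
    have key : s - c ≤ s * Real.log (s / c) := sub_le_mul_log' hs0.le hc0
    have hlog : Real.log (a / b) = 2 * Real.log (s / c) := by
      rw [Real.log_div (ne_of_gt h) (ne_of_gt hb), Real.log_div (ne_of_gt hs0) (ne_of_gt hc0),
        hs, hc, Real.log_sqrt ha, Real.log_sqrt hb.le]
      ring
    have ha' : a = s * s := (Real.mul_self_sqrt ha).symm
    have hb' : b = c * c := (Real.mul_self_sqrt hb.le).symm
    rw [hlog]
    nlinarith [mul_le_mul_of_nonneg_left key (le_of_lt (by positivity : (0:ℝ) < 2*s))]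

private lemma entVar' {ι : Type*} [Fintype ι] (ν Z : ι → ℝ) (hν : ∀ i, 0 ≤ ν i)
    (hZ : ∀ i, 0 ≤ Z i) :
    (∑ i, ν i * Z i) * Real.log (∑ i, ν i * Z i) + (∑ i, ν i * Z i)
      - (∑ i, ν i * Real.sqrt (Z i))^2 ≤ ∑ i, ν i * (Z i * Real.log (Z i)) := by
  set m := ∑ i, ν i * Z i with hm
  have hm0 : 0 ≤ m := Finset.sum_nonneg fun i _ => mul_nonneg (hν i) (hZ i)
  rcases eq_or_lt_of_le hm0 with h | h
  · have hz : ∀ i ∈ Finset.univ, ν i * Z i = 0 :=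
      (Finset.sum_eq_zero_iff_of_nonneg (fun i _ => mul_nonneg (hν i) (hZ i))).1 h.symm
    have hR : ∑ i, ν i * (Z i * Real.log (Z i)) = 0 := by
      apply Finset.sum_eq_zero; intro i hi
      rcases mul_eq_zero.1 (hz i hi) with h0 | h0 <;> simp [h0]
    have hS : ∑ i, ν i * Real.sqrt (Z i) = 0 := by
      apply Finset.sum_eq_zero; intro i hi
      rcases mul_eq_zero.1 (hz i hi) with h0 | h0 <;> simp [h0]
    rw [hR, hS, ← h]; simp
  · set s := ∑ i, ν i * Real.sqrt (Z i) with hs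
    have key : ∀ i ∈ Finset.univ,
        ν i * (2*Z i - 2*Real.sqrt (Z i) * Real.sqrt m) ≤ ν i * (Z i * Real.log (Z i / m)) := by
      intro i _
      exact mul_le_mul_of_nonneg_left (sqrt_ineq' (hZ i) h) (hν i)
    have hsum := Finset.sum_le_sum key
    have hL : ∑ i, ν i * (2*Z i - 2*Real.sqrt (Z i) * Real.sqrt m)
        = 2*m - 2*Real.sqrt m * s := by
      have : ∀ i ∈ Finset.univ, ν i * (2*Z i - 2*Real.sqrt (Z i) * Real.sqrt m)
          = 2*(ν i * Z i) - 2*Real.sqrt m * (ν i * Real.sqrt (Z i)) := by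
        intro i _; ring
      rw [Finset.sum_congr rfl this, Finset.sum_sub_distrib, ← Finset.mul_sum, ← Finset.mul_sum,
        ← hm, ← hs]
    have hR : ∑ i, ν i * (Z i * Real.log (Z i / m))
        = (∑ i, ν i * (Z i * Real.log (Z i))) - m * Real.log m := by
      have hmlog : m * Real.log m = ∑ i, (ν i * Z i) * Real.log m := by
        rw [← Finset.sum_mul]
      rw [hmlog, ← Finset.sum_sub_distrib]
      apply Finset.sum_congr rfl; intro i _
      rcases eq_or_lt_of_le (hZ i) with h0 | h0
      · simp [← h0]
      · rw [Real.log_div (ne_of_gt h0) (ne_of_gt h)]; ring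
    rw [hL, hR] at hsum
    have hsq : 0 ≤ (Real.sqrt m - s)^2 := sq_nonneg _
    have hmm : Real.sqrt m ^ 2 = m := Real.sq_sqrt hm0
    nlinarith

/-! ### Abstract reversible-chain lemmas -/

section MarkovAux
variable {ι : Type*} [Fintype ι] [DecidableEq ι]
variable {w : ι → ℝ} {Q : Matrix ι ι ℝ}

private lemma stat' (hQ1 : ∀ i, ∑ j, Q i j = 1) (hrev : ∀ i j, w i * Q i j = w j * Q j i)
    (n : ι) : ∑ i, w i * Q i n = w n := by
  calc ∑ i, w i * Q i n = ∑ i, w n * Q n i := Finset.sum_congr rfl fun i _ => hrev i n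
    _ = w n := by rw [← Finset.mul_sum, hQ1 n, mul_one]

private lemma weightCS' (ν : ι → ℝ) (hν : ∀ i, 0 ≤ ν i) (hν1 : ∑ j, ν j = 1) (g : ι → ℝ) :
    (∑ m, ν m * g m)^2 ≤ ∑ m, ν m * (g m)^2 := by
  have h := Finset.sum_mul_sq_le_sq_mul_sq Finset.univ
    (fun m => Real.sqrt (ν m)) (fun m => Real.sqrt (ν m) * g m)
  have e1 : ∀ m ∈ Finset.univ, Real.sqrt (ν m) * (Real.sqrt (ν m) * g m) = ν m * g m := by
    intro m _; rw [← mul_assoc, Real.mul_self_sqrt (hν m)]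
  have e2 : ∀ m ∈ Finset.univ, (Real.sqrt (ν m))^2 = ν m := fun m _ => Real.sq_sqrt (hν m)
  have e3 : ∀ m ∈ Finset.univ, (Real.sqrt (ν m) * g m)^2 = ν m * (g m)^2 := by
    intro m _; rw [mul_pow, Real.sq_sqrt (hν m)]
  rw [Finset.sum_congr rfl e1, Finset.sum_congr rfl e2, Finset.sum_congr rfl e3, hν1, one_mul] at h
  exact h

private lemma swap_stat' (hQ1 : ∀ i, ∑ j, Q i j = 1) (hrev : ∀ i j, w i * Q i j = w j * Q j i)
    (g : ι → ℝ) : ∑ j, w j * ∑ m, Q j m * g m = ∑ m, w m * g m := by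
  calc ∑ j, w j * ∑ m, Q j m * g m = ∑ j, ∑ m, w j * Q j m * g m := by
        apply Finset.sum_congr rfl; intro j _; rw [Finset.mul_sum]
        apply Finset.sum_congr rfl; intro m _; ring
    _ = ∑ m, ∑ j, w j * Q j m * g m := Finset.sum_comm
    _ = ∑ m, w m * g m := by
        apply Finset.sum_congr rfl; intro m _
        rw [← Finset.sum_mul, stat' hQ1 hrev]

private lemma contraction' (hw : ∀ i, 0 ≤ w i) (hQ0 : ∀ i j, 0 ≤ Q i j)
    (hQ1 : ∀ i, ∑ j, Q i j = 1)
    (hrev : ∀ i j, w i * Q i j = w j * Q j i) (g : ι → ℝ) :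
    ∑ j, w j * (∑ m, Q j m * g m)^2 ≤ ∑ m, w m * (g m)^2 := by
  calc ∑ j, w j * (∑ m, Q j m * g m)^2
      ≤ ∑ j, w j * ∑ m, Q j m * (g m)^2 :=
        Finset.sum_le_sum fun j _ => mul_le_mul_of_nonneg_left
          (weightCS' (fun m => Q j m) (hQ0 j) (hQ1 j) g) (hw j)
    _ = ∑ m, w m * (g m)^2 := swap_stat' hQ1 hrev _

private lemma selfadj' (hrev : ∀ i j, w i * Q i j = w j * Q j i) (g : ι → ℝ) :
    ∑ j, (∑ y, (Q * Q) j y * g y) * g j * w j = ∑ n, w n * (∑ m, Q n m * g m)^2 := by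
  have expand : ∀ j, ∑ y, (Q * Q) j y * g y = ∑ n, Q j n * ∑ y, Q n y * g y := by
    intro j
    calc ∑ y, (Q * Q) j y * g y = ∑ y, (∑ n, Q j n * Q n y) * g y := by
          apply Finset.sum_congr rfl; intro y _; rw [Matrix.mul_apply]
      _ = ∑ y, ∑ n, Q j n * (Q n y * g y) := by
          apply Finset.sum_congr rfl; intro y _; rw [Finset.sum_mul]
          apply Finset.sum_congr rfl; intro n _; ring
      _ = ∑ n, ∑ y, Q j n * (Q n y * g y) := Finset.sum_comm
      _ = ∑ n, Q j n * ∑ y, Q n y * g y := by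
          apply Finset.sum_congr rfl; intro n _; rw [Finset.mul_sum]
  calc ∑ j, (∑ y, (Q * Q) j y * g y) * g j * w j
      = ∑ j, ∑ n, (w j * Q j n) * g j * (∑ y, Q n y * g y) := by
        apply Finset.sum_congr rfl; intro j _
        rw [expand j, Finset.sum_mul, Finset.sum_mul]
        apply Finset.sum_congr rfl; intro n _; ring
    _ = ∑ n, ∑ j, (w n * Q n j) * g j * (∑ y, Q n y * g y) := by
        rw [Finset.sum_comm]
        apply Finset.sum_congr rfl; intro n _
        apply Finset.sum_congr rfl; intro j _; rw [hrev]
    _ = ∑ n, w n * (∑ m, Q n m * g m)^2 := by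
        apply Finset.sum_congr rfl; intro n _
        rw [← Finset.sum_mul]
        have : ∑ j, w n * Q n j * g j = w n * ∑ j, Q n j * g j := by
          rw [Finset.mul_sum]; apply Finset.sum_congr rfl; intro j _; ring
        rw [this]; ring

private lemma dirichlet_eq' (hrev : ∀ i j, w i * Q i j = w j * Q j i) (g : ι → ℝ) :
    dirichletForm w (Q ^ 2) g
      = (∑ m, w m * (g m)^2) - ∑ n, w n * (∑ m, Q n m * g m)^2 := by
  rw [dirichletForm, pow_two]
  calc ∑ x, (g x - ∑ y, (Q * Q) x y * g y) * g x * w x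
      = ∑ x, (w x * (g x)^2 - (∑ y, (Q * Q) x y * g y) * g x * w x) := by
        apply Finset.sum_congr rfl; intro x _; ring
    _ = (∑ m, w m * (g m)^2) - ∑ x, (∑ y, (Q * Q) x y * g y) * g x * w x :=
        Finset.sum_sub_distrib _ _
    _ = _ := by rw [selfadj' hrev]

private lemma dirichlet_nonneg' (hw : ∀ i, 0 ≤ w i) (hQ0 : ∀ i j, 0 ≤ Q i j)
    (hQ1 : ∀ i, ∑ j, Q i j = 1) (hrev : ∀ i j, w i * Q i j = w j * Q j i) (g : ι → ℝ) :
    0 ≤ dirichletForm w (Q ^ 2) g := by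
  rw [dirichlet_eq' hrev]
  have := contraction' hw hQ0 hQ1 hrev g
  linarith

omit [DecidableEq ι] in
private lemma entFunc_nonneg' (hw : ∀ i, 0 ≤ w i) (hw1 : ∑ i, w i = 1) (g : ι → ℝ) :
    0 ≤ entFunc w g := by
  rw [entFunc]
  set S := ∑ z, (g z) ^ 2 * w z with hS
  have hS0 : 0 ≤ S := Finset.sum_nonneg fun z _ => mul_nonneg (sq_nonneg _) (hw z)
  rcases eq_or_lt_of_le hS0 with h | h
  · apply Finset.sum_nonneg; intro x _
    have hz : (g x)^2 * w x = 0 :=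
      (Finset.sum_eq_zero_iff_of_nonneg (fun z _ => mul_nonneg (sq_nonneg _) (hw z))).1 h.symm x
        (Finset.mem_univ x)
    rcases mul_eq_zero.1 hz with h0 | h0 <;> simp [h0]
  · have key : ∀ x ∈ Finset.univ,
        ((g x)^2 - S) * w x ≤ (g x) ^ 2 * Real.log ((g x) ^ 2 / S) * w x := by
      intro x _
      exact mul_le_mul_of_nonneg_right (sub_le_mul_log' (sq_nonneg _) h) (hw x)
    have hsum := Finset.sum_le_sum key
    have : ∑ x, ((g x)^2 - S) * w x = 0 := by
      have e : ∀ x ∈ Finset.univ, ((g x)^2 - S) * w x = (g x)^2 * w x - S * w x := by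
        intro x _; ring
      rw [Finset.sum_congr rfl e, Finset.sum_sub_distrib, ← hS, ← Finset.mul_sum, hw1]
      ring
    linarith

omit [DecidableEq ι] in
private lemma entFunc_zero_of' (hw : ∀ i, 0 ≤ w i) (g : ι → ℝ)
    (hS : ∑ z, (g z) ^ 2 * w z = 0) : entFunc w g = 0 := by
  rw [entFunc]
  apply Finset.sum_eq_zero; intro x _
  have hz : (g x)^2 * w x = 0 :=
    (Finset.sum_eq_zero_iff_of_nonneg (fun z _ => mul_nonneg (sq_nonneg _) (hw z))).1 hS x
      (Finset.mem_univ x)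
  rcases mul_eq_zero.1 hz with h0 | h0 <;> simp [h0]

omit [DecidableEq ι] in
private lemma entFunc_split' (g : ι → ℝ)
    (hS : 0 < ∑ z, (g z) ^ 2 * w z) :
    entFunc w g = (∑ x, w x * ((g x)^2 * Real.log ((g x)^2)))
      - (∑ z, (g z) ^ 2 * w z) * Real.log (∑ z, (g z) ^ 2 * w z) := by
  rw [entFunc]
  set S := ∑ z, (g z) ^ 2 * w z with hSdef
  have e : ∀ x ∈ Finset.univ, (g x) ^ 2 * Real.log ((g x) ^ 2 / S) * w x
      = w x * ((g x)^2 * Real.log ((g x)^2)) - ((g x)^2 * w x) * Real.log S := by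
    intro x _
    rcases eq_or_ne (g x) 0 with h0 | h0
    · simp [h0]
    · rw [Real.log_div (pow_ne_zero 2 h0) (ne_of_gt hS)]; ring
  rw [Finset.sum_congr rfl e, Finset.sum_sub_distrib, ← Finset.sum_mul, ← hSdef]

omit [DecidableEq ι] in
private lemma entFunc_ge' (hw : ∀ i, 0 ≤ w i) (g : ι → ℝ)
    (hS : 0 < ∑ z, (g z) ^ 2 * w z) :
    (∑ z, (g z)^2 * w z) - (∑ i, w i * |g i|)^2 ≤ entFunc w g := by
  have hev := entVar' w (fun i => (g i)^2) hw (fun i => sq_nonneg _)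
  have e1 : ∑ i, w i * (g i)^2 = ∑ z, (g z)^2 * w z :=
    Finset.sum_congr rfl fun i _ => mul_comm _ _
  have e2 : ∀ i ∈ Finset.univ, w i * Real.sqrt ((g i)^2) = w i * |g i| := by
    intro i _; rw [Real.sqrt_sq_eq_abs]
  rw [e1, Finset.sum_congr rfl e2] at hev
  rw [entFunc_split' g hS]
  linarith

private lemma alpha_mul_le' (hw : ∀ i, 0 ≤ w i) (hw1 : ∑ i, w i = 1)
    (hQ0 : ∀ i j, 0 ≤ Q i j)
    (hQ1 : ∀ i, ∑ j, Q i j = 1) (hrev : ∀ i j, w i * Q i j = w j * Q j i) (g : ι → ℝ) :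
    logSobolev w (Q ^ 2) * entFunc w g ≤ dirichletForm w (Q ^ 2) g := by
  have hlb : ∀ r ∈ {r : ℝ | ∃ f : ι → ℝ, entFunc w f ≠ 0 ∧
      r = dirichletForm w (Q ^ 2) f / entFunc w f}, (0:ℝ) ≤ r := by
    rintro r ⟨f, hf, rfl⟩
    exact div_nonneg (dirichlet_nonneg' hw hQ0 hQ1 hrev f) (entFunc_nonneg' hw hw1 f)
  by_cases hE : entFunc w g = 0
  · rw [hE, mul_zero]; exact dirichlet_nonneg' hw hQ0 hQ1 hrev g
  · have hEpos : 0 < entFunc w g := (entFunc_nonneg' hw hw1 g).lt_of_ne (Ne.symm hE)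
    have hle : logSobolev w (Q ^ 2) ≤ dirichletForm w (Q ^ 2) g / entFunc w g :=
      csInf_le ⟨0, fun r hr => hlb r hr⟩ ⟨g, hE, rfl⟩
    calc logSobolev w (Q ^ 2) * entFunc w g
        ≤ (dirichletForm w (Q ^ 2) g / entFunc w g) * entFunc w g :=
          mul_le_mul_of_nonneg_right hle hEpos.le
      _ = dirichletForm w (Q ^ 2) g := div_mul_cancel₀ _ hE

private lemma alpha_le_one' (hw : ∀ i, 0 ≤ w i) (hw1 : ∑ i, w i = 1)
    (hQ0 : ∀ i j, 0 ≤ Q i j)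
    (hQ1 : ∀ i, ∑ j, Q i j = 1) (hrev : ∀ i j, w i * Q i j = w j * Q j i) :
    logSobolev w (Q ^ 2) ≤ 1 := by
  rw [logSobolev]
  rcases Set.eq_empty_or_nonempty {r : ℝ | ∃ f : ι → ℝ, entFunc w f ≠ 0 ∧
      r = dirichletForm w (Q ^ 2) f / entFunc w f} with h | h
  · rw [h, Real.sInf_empty]; norm_num
  · obtain ⟨r, f, hf, rfl⟩ := h
    set g := fun i => |f i| with hgdef
    have hg0 : ∀ i, 0 ≤ g i := fun i => abs_nonneg _
    have hEg : entFunc w g = entFunc w f := by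
      apply Finset.sum_congr rfl; intro x _
      have e : ∀ z, (g z)^2 = (f z)^2 := fun z => sq_abs _
      simp only [e]
    have hSpos : 0 < ∑ z, (g z) ^ 2 * w z := by
      rcases (Finset.sum_nonneg fun z (_ : z ∈ Finset.univ) =>
        mul_nonneg (sq_nonneg (g z)) (hw z)).lt_or_eq with h' | h'
      · exact h'
      · exact absurd (hEg ▸ entFunc_zero_of' hw g h'.symm) hf
    have hEgpos : 0 < entFunc w g := by
      rw [hEg]; exact (entFunc_nonneg' hw hw1 f).lt_of_ne (Ne.symm hf)
    have hDg : dirichletForm w (Q ^ 2) g ≤ entFunc w g := by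
      rw [dirichlet_eq' hrev]
      have h1 : ∑ n, w n * (∑ m, Q n m * g m) = ∑ m, w m * g m := swap_stat' hQ1 hrev g
      have h2 : (∑ n, w n * (∑ m, Q n m * g m))^2 ≤ ∑ n, w n * (∑ m, Q n m * g m)^2 :=
        weightCS' w hw hw1 _
      have h3 := entFunc_ge' hw g hSpos
      have e1 : ∑ m, w m * (g m)^2 = ∑ z, (g z)^2 * w z :=
        Finset.sum_congr rfl fun i _ => mul_comm _ _
      have e2 : ∀ i ∈ Finset.univ, w i * |g i| = w i * g i := by
        intro i _; rw [abs_of_nonneg (hg0 i)]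
      rw [Finset.sum_congr rfl e2] at h3
      rw [h1] at h2
      rw [e1]
      linarith
    have hmem : dirichletForm w (Q ^ 2) g / entFunc w g ∈ {r : ℝ | ∃ f : ι → ℝ,
        entFunc w f ≠ 0 ∧ r = dirichletForm w (Q ^ 2) f / entFunc w f} :=
      ⟨g, by rw [hEg]; exact hf, rfl⟩
    have hlb : ∀ r ∈ {r : ℝ | ∃ f : ι → ℝ, entFunc w f ≠ 0 ∧
        r = dirichletForm w (Q ^ 2) f / entFunc w f}, (0:ℝ) ≤ r := by
      rintro r ⟨f', hf', rfl⟩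
      exact div_nonneg (dirichlet_nonneg' hw hQ0 hQ1 hrev f') (entFunc_nonneg' hw hw1 f')
    exact (csInf_le ⟨0, fun r hr => hlb r hr⟩ hmem).trans
      ((div_le_one hEgpos).2 hDg)

private lemma decay' (hw : ∀ i, 0 ≤ w i) (hw1 : ∑ i, w i = 1) (hQ0 : ∀ i j, 0 ≤ Q i j)
    (hQ1 : ∀ i, ∑ j, Q i j = 1) (hrev : ∀ i j, w i * Q i j = w j * Q j i)
    (f : ι → ℝ) (hf : ∀ i, 0 ≤ f i) (hf1 : ∑ i, w i * f i = 1) :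
    ∑ j, w j * ((∑ m, Q j m * f m) * Real.log (∑ m, Q j m * f m))
      ≤ (1 - logSobolev w (Q ^ 2)) * ∑ i, w i * (f i * Real.log (f i)) := by
  set h := fun m => Real.sqrt (f m) with hh
  set E := ∑ i, w i * (f i * Real.log (f i)) with hE
  set K := ∑ j, w j * (∑ m, Q j m * h m)^2 with hK
  have stepA : (∑ j, w j * ((∑ m, Q j m * f m) * Real.log (∑ m, Q j m * f m)))
      + 1 - K ≤ E := by
    have perj : ∀ j ∈ Finset.univ,
        w j * ((∑ m, Q j m * f m) * Real.log (∑ m, Q j m * f m)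
          + (∑ m, Q j m * f m) - (∑ m, Q j m * h m)^2)
        ≤ w j * (∑ m, Q j m * (f m * Real.log (f m))) := by
      intro j _
      exact mul_le_mul_of_nonneg_left (entVar' (fun m => Q j m) f (hQ0 j) hf) (hw j)
    have hsum := Finset.sum_le_sum perj
    have hsplit : ∑ j, w j * ((∑ m, Q j m * f m) * Real.log (∑ m, Q j m * f m)
          + (∑ m, Q j m * f m) - (∑ m, Q j m * h m)^2)
        = (∑ j, w j * ((∑ m, Q j m * f m) * Real.log (∑ m, Q j m * f m)))
          + (∑ j, w j * (∑ m, Q j m * f m)) - K := by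
      rw [hK]
      calc ∑ j, w j * ((∑ m, Q j m * f m) * Real.log (∑ m, Q j m * f m)
              + (∑ m, Q j m * f m) - (∑ m, Q j m * h m)^2)
          = ∑ j, ((w j * ((∑ m, Q j m * f m) * Real.log (∑ m, Q j m * f m))
              + w j * (∑ m, Q j m * f m)) - w j * (∑ m, Q j m * h m)^2) := by
            apply Finset.sum_congr rfl; intro j _; ring
        _ = (∑ j, (w j * ((∑ m, Q j m * f m) * Real.log (∑ m, Q j m * f m))
              + w j * (∑ m, Q j m * f m))) - ∑ j, w j * (∑ m, Q j m * h m)^2 :=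
            Finset.sum_sub_distrib _ _
        _ = _ := by rw [Finset.sum_add_distrib]
    have h1 : ∑ j, w j * (∑ m, Q j m * f m) = 1 := by rw [swap_stat' hQ1 hrev, hf1]
    have h2 : ∑ j, w j * (∑ m, Q j m * (f m * Real.log (f m))) = E := by
      rw [swap_stat' hQ1 hrev]
    rw [hsplit, h1, h2] at hsum
    exact hsum
  have hsq : ∀ m, (h m)^2 = f m := fun m => Real.sq_sqrt (hf m)
  have hS1 : ∑ z, (h z) ^ 2 * w z = 1 := by
    rw [← hf1]; exact Finset.sum_congr rfl fun z _ => by rw [hsq z]; ring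
  have hEnt : entFunc w h = E := by
    rw [entFunc, hS1, hE]
    apply Finset.sum_congr rfl; intro x _
    rw [hsq x, div_one]; ring
  have hDir : dirichletForm w (Q ^ 2) h = 1 - K := by
    rw [dirichlet_eq' hrev, hK]
    congr 1
    rw [← hS1]; exact Finset.sum_congr rfl fun m _ => by rw [hsq m]; ring
  have stepB : logSobolev w (Q ^ 2) * E ≤ 1 - K := by
    rw [← hEnt, ← hDir]; exact alpha_mul_le' hw hw1 hQ0 hQ1 hrev h
  nlinarith [stepA, stepB]

private lemma decayMu' (hwpos : ∀ i, 0 < w i) (hw1 : ∑ i, w i = 1)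
    (hQ0 : ∀ i j, 0 ≤ Q i j)
    (hQ1 : ∀ i, ∑ j, Q i j = 1) (hrev : ∀ i j, w i * Q i j = w j * Q j i)
    (μ : ι → ℝ) (hμ0 : ∀ i, 0 ≤ μ i) (hμ1 : ∑ i, μ i = 1) :
    ∑ j, (∑ m, μ m * Q m j) * Real.log ((∑ m, μ m * Q m j) / w j)
      ≤ (1 - logSobolev w (Q ^ 2)) * ∑ i, μ i * Real.log (μ i / w i) := by
  set f := fun i => μ i / w i with hfdef
  have hf : ∀ i, 0 ≤ f i := fun i => div_nonneg (hμ0 i) (hwpos i).le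
  have hwf : ∀ i, w i * f i = μ i := fun i => by
    show w i * (μ i / w i) = μ i
    rw [mul_comm]; exact div_mul_cancel₀ _ (ne_of_gt (hwpos i))
  have hf1 : ∑ i, w i * f i = 1 := by
    rw [Finset.sum_congr rfl fun i _ => hwf i, hμ1]
  have hstep : ∀ j, ∑ m, μ m * Q m j = w j * (∑ m, Q j m * f m) := by
    intro j
    rw [Finset.mul_sum]
    apply Finset.sum_congr rfl; intro m _
    calc μ m * Q m j = (w m * Q m j) * f m := by
          rw [← hwf m]; ring
      _ = w j * (Q j m * f m) := by rw [hrev]; ring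
  have hL : ∀ j, (∑ m, μ m * Q m j) * Real.log ((∑ m, μ m * Q m j) / w j)
      = w j * ((∑ m, Q j m * f m) * Real.log (∑ m, Q j m * f m)) := by
    intro j
    rw [hstep j, mul_div_cancel_left₀ _ (ne_of_gt (hwpos j))]
    ring
  have hR : ∀ i, μ i * Real.log (μ i / w i) = w i * (f i * Real.log (f i)) := by
    intro i
    show μ i * Real.log (μ i / w i) = w i * ((μ i / w i) * Real.log (μ i / w i))
    rw [← mul_assoc, mul_div_cancel₀ _ (ne_of_gt (hwpos i))]
  rw [Finset.sum_congr rfl fun j _ => hL j, Finset.sum_congr rfl fun i _ => hR i]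
  exact decay' (fun i => (hwpos i).le) hw1 hQ0 hQ1 hrev f hf hf1

private lemma pow_stoch' (hQ0 : ∀ i j, 0 ≤ Q i j) (hQ1 : ∀ i, ∑ j, Q i j = 1) (l : ℕ) :
    (∀ i j, 0 ≤ (Q ^ l) i j) ∧ ∀ i, ∑ j, (Q ^ l) i j = 1 := by
  induction l with
  | zero =>
    constructor
    · intro i j; rw [pow_zero, Matrix.one_apply]
      split <;> norm_num
    · intro i; rw [pow_zero]
      simp [Matrix.one_apply]
  | succ l ih =>
    constructor
    · intro i j
      rw [pow_succ, Matrix.mul_apply]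
      exact Finset.sum_nonneg fun m _ => mul_nonneg (ih.1 i m) (hQ0 m j)
    · intro i
      rw [pow_succ]
      calc ∑ j, (Q ^ l * Q) i j = ∑ j, ∑ m, (Q ^ l) i m * Q m j := by
            apply Finset.sum_congr rfl; intro j _; rw [Matrix.mul_apply]
        _ = ∑ m, ∑ j, (Q ^ l) i m * Q m j := Finset.sum_comm
        _ = ∑ m, (Q ^ l) i m := by
            apply Finset.sum_congr rfl; intro m _
            rw [← Finset.mul_sum, hQ1 m, mul_one]
        _ = 1 := ih.2 i

private lemma iterateBound' (hwpos : ∀ i, 0 < w i) (hw1 : ∑ i, w i = 1)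
    (hQ0 : ∀ i j, 0 ≤ Q i j)
    (hQ1 : ∀ i, ∑ j, Q i j = 1) (hrev : ∀ i j, w i * Q i j = w j * Q j i)
    (i : ι) (l : ℕ) :
    ∑ j, (Q ^ l) i j * Real.log ((Q ^ l) i j / w j)
      ≤ (1 - logSobolev w (Q ^ 2))^l * (- Real.log (w i)) := by
  induction l with
  | zero =>
    rw [pow_zero, pow_zero, one_mul]
    rw [Finset.sum_eq_single i]
    · rw [Matrix.one_apply_eq, one_mul, one_div, Real.log_inv]
    · intro j _ hj
      rw [Matrix.one_apply_ne (fun hh => hj hh.symm)]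
      simp
    · intro hi; exact absurd (Finset.mem_univ i) hi
  | succ l ih =>
    have hs := pow_stoch' hQ0 hQ1 l
    have hrow1 : ∑ m, (Q ^ l) i m = 1 := hs.2 i
    have step := decayMu' hwpos hw1 hQ0 hQ1 hrev (fun m => (Q ^ l) i m)
      (fun m => hs.1 i m) hrow1
    have hentry : ∀ j, (Q ^ (l+1)) i j = ∑ m, (Q ^ l) i m * Q m j := by
      intro j; rw [pow_succ, Matrix.mul_apply]
    have halpha : 0 ≤ 1 - logSobolev w (Q ^ 2) := by
      have := alpha_le_one' (fun i => (hwpos i).le) hw1 hQ0 hQ1 hrev (Q := Q)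
      linarith
    calc ∑ j, (Q ^ (l+1)) i j * Real.log ((Q ^ (l+1)) i j / w j)
        = ∑ j, (∑ m, (Q ^ l) i m * Q m j) * Real.log ((∑ m, (Q ^ l) i m * Q m j) / w j) := by
          apply Finset.sum_congr rfl; intro j _; rw [hentry j]
      _ ≤ (1 - logSobolev w (Q ^ 2)) * ∑ m, (Q ^ l) i m * Real.log ((Q ^ l) i m / w m) := step
      _ ≤ (1 - logSobolev w (Q ^ 2)) * ((1 - logSobolev w (Q ^ 2))^l * (- Real.log (w i))) :=
          mul_le_mul_of_nonneg_left ih halpha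
      _ = (1 - logSobolev w (Q ^ 2))^(l+1) * (- Real.log (w i)) := by ring

end MarkovAux

/-! ### Concrete orbit-partition lemmas -/

section ConcreteAux
variable {X : Type*} [Fintype X] [DecidableEq X] {k : ℕ}
variable {π : X → ℝ} {o : X → Fin k} {P : Matrix X X ℝ}

private lemma fiber_sum (o : X → Fin k) (f : X → ℝ) :
    ∑ i, ∑ x ∈ Finset.filter (fun x => o x = i) Finset.univ, f x = ∑ x, f x := by
  rw [Finset.sum_fiberwise_eq_sum_filter]
  simp

private lemma fiber_sum' (π : X → ℝ) (o : X → Fin k) (F : Fin k → ℝ) :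
    ∑ x, π x * F (o x) = ∑ i, orbMass π o i * F i := by
  rw [← fiber_sum o (fun x => π x * F (o x))]
  apply Finset.sum_congr rfl; intro i _
  rw [orbMass, Finset.sum_mul]
  apply Finset.sum_congr rfl; intro x hx
  rw [(Finset.mem_filter.1 hx).2]

private lemma orbMass_pos (hπ : ∀ x, 0 < π x) (ho : Function.Surjective o) (i : Fin k) :
    0 < orbMass π o i := by
  obtain ⟨x, hx⟩ := ho i
  apply Finset.sum_pos (fun y _ => hπ y)
  exact ⟨x, Finset.mem_filter.2 ⟨Finset.mem_univ x, hx⟩⟩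

private lemma orbMass_sum (hsum : ∑ x, π x = 1) : ∑ i, orbMass π o i = 1 := by
  have := fiber_sum' π o (fun _ => (1:ℝ))
  simpa [hsum] using this.symm

private lemma proj_symm_core (hP : IsReversible π P) (i j : Fin k) :
    ∑ x ∈ Finset.filter (fun x => o x = i) Finset.univ,
      ∑ y ∈ Finset.filter (fun y => o y = j) Finset.univ, π x * P x y
    = ∑ x ∈ Finset.filter (fun x => o x = j) Finset.univ,
      ∑ y ∈ Finset.filter (fun y => o y = i) Finset.univ, π x * P x y := by
  rw [Finset.sum_comm]
  apply Finset.sum_congr rfl; intro y _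
  apply Finset.sum_congr rfl; intro x _
  exact hP.2 x y

private lemma proj_rev (hπ : ∀ x, 0 < π x) (ho : Function.Surjective o)
    (hP : IsReversible π P) :
    ∀ i j, orbMass π o i * projChain π o P i j = orbMass π o j * projChain π o P j i := by
  intro i j
  have hi := orbMass_pos hπ ho i
  have hj := orbMass_pos hπ ho j
  show orbMass π o i * ((1 / orbMass π o i) * _) = orbMass π o j * ((1 / orbMass π o j) * _)
  rw [← mul_assoc, ← mul_assoc, mul_one_div, div_self (ne_of_gt hi),
    mul_one_div, div_self (ne_of_gt hj), one_mul, one_mul]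
  exact proj_symm_core hP i j

private lemma proj_nonneg (hπ : ∀ x, 0 < π x) (ho : Function.Surjective o)
    (hP : IsReversible π P) :
    ∀ i j, 0 ≤ projChain π o P i j := by
  intro i j
  apply mul_nonneg
  · have := orbMass_pos hπ ho i
    positivity
  · apply Finset.sum_nonneg; intro x _
    apply Finset.sum_nonneg; intro y _
    exact mul_nonneg (hπ x).le (hP.1.1 x y)

private lemma proj_rowsum (hπ : ∀ x, 0 < π x) (ho : Function.Surjective o)
    (hP : IsReversible π P) :
    ∀ i, ∑ j, projChain π o P i j = 1 := by
  intro i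
  have hi := orbMass_pos hπ ho i
  calc ∑ j, projChain π o P i j
      = (1 / orbMass π o i) * ∑ j, ∑ x ∈ Finset.filter (fun x => o x = i) Finset.univ,
          ∑ y ∈ Finset.filter (fun y => o y = j) Finset.univ, π x * P x y := by
        rw [Finset.mul_sum]; rfl
    _ = (1 / orbMass π o i) * ∑ x ∈ Finset.filter (fun x => o x = i) Finset.univ,
          ∑ j, ∑ y ∈ Finset.filter (fun y => o y = j) Finset.univ, π x * P x y := by
        rw [Finset.sum_comm]
    _ = (1 / orbMass π o i) * ∑ x ∈ Finset.filter (fun x => o x = i) Finset.univ, π x := by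
        congr 1
        apply Finset.sum_congr rfl; intro x _
        rw [fiber_sum o (fun y => π x * P x y), ← Finset.mul_sum, hP.1.2 x, mul_one]
    _ = 1 := by rw [← orbMass, one_div, inv_mul_cancel₀ (ne_of_gt hi)]

private lemma gibbs_mul_P_apply (x v : X) :
    (gibbs π o * P) x v
      = (1 / orbMass π o (o x)) *
          ∑ y ∈ Finset.filter (fun y => o y = o x) Finset.univ, π y * P y v := by
  rw [Matrix.mul_apply, Finset.sum_filter, Finset.mul_sum]
  apply Finset.sum_congr rfl; intro y _
  show (if o x = o y then π y / orbMass π o (o x) else 0) * P y v = _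
  by_cases h : o y = o x
  · rw [if_pos h.symm, if_pos h]; ring
  · rw [if_neg (fun hh => h hh.symm), if_neg h, zero_mul, mul_zero]

private lemma gpg_apply (x z : X) :
    (gibbs π o * P * gibbs π o) x z
      = projChain π o P (o x) (o z) * π z / orbMass π o (o z) := by
  rw [Matrix.mul_apply]
  have e1 : ∀ v, (gibbs π o * P) x v * gibbs π o v z
      = if o v = o z then (gibbs π o * P) x v * (π z / orbMass π o (o z)) else 0 := by
    intro v
    show (gibbs π o * P) x v * (if o v = o z then π z / orbMass π o (o v) else 0) = _
    by_cases h : o v = o z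
    · rw [if_pos h, if_pos h, h]
    · rw [if_neg h, if_neg h, mul_zero]
  rw [Finset.sum_congr rfl (fun v _ => e1 v), ← Finset.sum_filter, ← Finset.sum_mul]
  have e2 : ∑ v ∈ Finset.filter (fun v => o v = o z) Finset.univ, (gibbs π o * P) x v
      = projChain π o P (o x) (o z) := by
    rw [Finset.sum_congr rfl (fun v _ => gibbs_mul_P_apply x v), ← Finset.mul_sum]
    show _ = (1 / orbMass π o (o x)) * ∑ y ∈ _, ∑ v ∈ _, π y * P y v
    rw [Finset.sum_comm]
  rw [e2, mul_div_assoc]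

end ConcreteAux

set_option maxHeartbeats 1000000 in
/-- D_KL^π((GPG)^l ‖ Π) ≤ (1 − α(P̄²))^l · H(π̄). -/
theorem stmt2 [Fintype X] [DecidableEq X] {k : ℕ} (π : X → ℝ) (o : X → Fin k)
    (hπ : ∀ x, 0 < π x) (hsum : ∑ x, π x = 1) (ho : Function.Surjective o)
    (P : Matrix X X ℝ) (hP : IsReversible π P) (l : ℕ) (hl : 0 < l) :
    klDiv π ((gibbs π o * P * gibbs π o) ^ l) (Pimat π)
      ≤ (1 - logSobolev (orbMass π o) ((projChain π o P) ^ 2)) ^ l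
          * shannonEnt (orbMass π o) := by
  obtain ⟨n, rfl⟩ : ∃ n, l = n + 1 := ⟨l - 1, (Nat.succ_pred_eq_of_pos hl).symm⟩
  have hwpos : ∀ i, 0 < orbMass π o i := orbMass_pos hπ ho
  have hw1 : ∑ i, orbMass π o i = 1 := orbMass_sum hsum
  have hQ0 := proj_nonneg hπ ho hP
  have hQ1 := proj_rowsum hπ ho hP
  have hrev := proj_rev hπ ho hP
  set w := orbMass π o with hwdef
  set Q := projChain π o P with hQdef
  -- entries of (GPG)^(n+1)
  have hpow : ∀ (m : ℕ) (x z : X), ((gibbs π o * P * gibbs π o) ^ (m+1)) x z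
      = (Q ^ (m+1)) (o x) (o z) * π z / w (o z) := by
    intro m
    induction m with
    | zero => intro x z; rw [pow_one, pow_one]; exact gpg_apply x z
    | succ m ih =>
      intro x z
      rw [pow_succ, Matrix.mul_apply]
      have e : ∀ y, ((gibbs π o * P * gibbs π o) ^ (m+1)) x y * (gibbs π o * P * gibbs π o) y z
          = π y * ((Q ^ (m+1)) (o x) (o y) / w (o y) * (Q (o y) (o z) * π z / w (o z))) := by
        intro y
        rw [ih x y, gpg_apply y z]
        ring
      rw [Finset.sum_congr rfl fun y _ => e y,
        fiber_sum' π o (fun j => (Q ^ (m+1)) (o x) j / w j * (Q j (o z) * π z / w (o z)))]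
      have e2 : ∀ j ∈ Finset.univ,
          w j * ((Q ^ (m+1)) (o x) j / w j * (Q j (o z) * π z / w (o z)))
          = (Q ^ (m+1)) (o x) j * Q j (o z) * π z / w (o z) := by
        intro j _
        have hj : w j ≠ 0 := (hwpos j).ne'
        have e' : w j * ((Q ^ (m+1)) (o x) j / w j * (Q j (o z) * π z / w (o z)))
            = ((Q ^ (m+1)) (o x) j / w j * w j) * (Q j (o z) * π z / w (o z)) := by ring
        rw [e', div_mul_cancel₀ _ hj]
        ring
      have e3 : (Q ^ (m+1+1)) (o x) (o z) = ∑ j, (Q ^ (m+1)) (o x) j * Q j (o z) := by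
        rw [pow_succ, Matrix.mul_apply]
      rw [Finset.sum_congr rfl e2, e3, Finset.sum_mul, Finset.sum_div]
  -- rewrite the KL divergence
  have hπy : ∀ y : X, (π y) ≠ 0 := fun y => (hπ y).ne'
  have hterm : ∀ x y : X,
      π x * ((gibbs π o * P * gibbs π o) ^ (n+1)) x y *
        Real.log (((gibbs π o * P * gibbs π o) ^ (n+1)) x y / Pimat π x y)
      = π y * (π x * ((Q ^ (n+1)) (o x) (o y) *
          Real.log ((Q ^ (n+1)) (o x) (o y) / w (o y)) / w (o y))) := by
    intro x y
    rw [hpow n x y]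
    have harg : (Q ^ (n+1)) (o x) (o y) * π y / w (o y) / Pimat π x y
        = (Q ^ (n+1)) (o x) (o y) / w (o y) := by
      show _ / π y = _
      rw [div_div, mul_comm (w (o y)) (π y), ← div_div,
        mul_div_assoc, div_self (hπy y), mul_one]
    rw [harg]
    ring
  have hDent : ∀ x : X, ∑ y, π y * (π x * ((Q ^ (n+1)) (o x) (o y) *
        Real.log ((Q ^ (n+1)) (o x) (o y) / w (o y)) / w (o y)))
      = π x * ∑ j, (Q ^ (n+1)) (o x) j * Real.log ((Q ^ (n+1)) (o x) j / w j) := by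
    intro x
    rw [fiber_sum' π o (fun j => π x * ((Q ^ (n+1)) (o x) j *
      Real.log ((Q ^ (n+1)) (o x) j / w j) / w j)), Finset.mul_sum]
    apply Finset.sum_congr rfl; intro j _
    have hj : w j ≠ 0 := (hwpos j).ne'
    have e' : w j * (π x * ((Q ^ (n+1)) (o x) j * Real.log ((Q ^ (n+1)) (o x) j / w j) / w j))
        = (((Q ^ (n+1)) (o x) j * Real.log ((Q ^ (n+1)) (o x) j / w j)) / w j * w j) * π x := by
      ring
    rw [e', div_mul_cancel₀ _ hj]
    ring
  calc klDiv π ((gibbs π o * P * gibbs π o) ^ (n+1)) (Pimat π)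
      = ∑ x, π x * ∑ j, (Q ^ (n+1)) (o x) j * Real.log ((Q ^ (n+1)) (o x) j / w j) := by
        rw [klDiv]
        apply Finset.sum_congr rfl; intro x _
        rw [Finset.sum_congr rfl fun y _ => hterm x y, hDent x]
    _ = ∑ i, w i * ∑ j, (Q ^ (n+1)) i j * Real.log ((Q ^ (n+1)) i j / w j) :=
        fiber_sum' π o (fun i => ∑ j, (Q ^ (n+1)) i j * Real.log ((Q ^ (n+1)) i j / w j))
    _ ≤ ∑ i, w i * ((1 - logSobolev w (Q ^ 2))^(n+1) * (- Real.log (w i))) :=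
        Finset.sum_le_sum fun i _ => mul_le_mul_of_nonneg_left
          (iterateBound' hwpos hw1 hQ0 hQ1 hrev i (n+1)) (hwpos i).le
    _ = (1 - logSobolev w (Q ^ 2))^(n+1) * shannonEnt w := by
        have e : ∀ i ∈ Finset.univ, w i * ((1 - logSobolev w (Q ^ 2))^(n+1) * (- Real.log (w i)))
            = (1 - logSobolev w (Q ^ 2))^(n+1) * (-(w i * Real.log (w i))) := by
          intro i _; ring
        rw [Finset.sum_congr rfl e, ← Finset.mul_sum, shannonEnt]
        congr 1
        rw [← Finset.sum_neg_distrib]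

end
end GpgStmt
end

section
/- For π-reversible P and nontrivial S ⊂ X, the second eigenvalue of the two-block projection chain satisfies λ₂(P̄) = 1 − (1/(π(S)π(S'))) Σ_{x∈S, y∈S'} π(x)P(x,y), and for every l ∈ ℕ, ‖(G_S P G_S)^l − Π‖²_{F,π} = λ₂(P̄)^{2l} = (1 − (1/(π(S)π(S'))) Σ_{x∈S,y∈S'} π(x)P(x,y))^{2l}. -/
open Finset Matrix

namespace GpgStmt

noncomputable section

variable {X : Type*}

/-- Indicator map of the two-block partition (S, Sᶜ). -/
def twoBlock [Fintype X] [DecidableEq X] (S : Finset X) : X → Fin 2 :=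
  fun x => if x ∈ S then 0 else 1

section AuxGpg


/-- lift of a 2×2 (Bool-indexed) kernel to X. -/
def lift [Fintype X] [DecidableEq X] (π : X → ℝ) (S : Finset X)
    (f : Bool → Bool → ℝ) : Matrix X X ℝ :=
  Matrix.of fun x y => π y * f (decide (x ∈ S)) (decide (y ∈ S))

def comp2 (m0 m1 : ℝ) (f g : Bool → Bool → ℝ) : Bool → Bool → ℝ :=
  fun i j => m0 * (f i true * g true j) + m1 * (f i false * g false j)

variable [Fintype X] [DecidableEq X]

lemma lift_mul (π : X → ℝ) (S : Finset X) (f g : Bool → Bool → ℝ) :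
    lift π S f * lift π S g = lift π S (comp2 (mass π S) (mass π Sᶜ) f g) := by
  ext x y
  rw [Matrix.mul_apply]
  simp only [lift, Matrix.of_apply, comp2]
  rw [← Finset.sum_add_sum_compl S]
  have h1 : ∀ z ∈ S, π z * f (decide (x ∈ S)) (decide (z ∈ S)) *
      (π y * g (decide (z ∈ S)) (decide (y ∈ S)))
      = π z * (f (decide (x ∈ S)) true * (π y * g true (decide (y ∈ S)))) := by
    intro z hz; simp [hz]; ring
  have h2 : ∀ z ∈ Sᶜ, π z * f (decide (x ∈ S)) (decide (z ∈ S)) *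
      (π y * g (decide (z ∈ S)) (decide (y ∈ S)))
      = π z * (f (decide (x ∈ S)) false * (π y * g false (decide (y ∈ S)))) := by
    intro z hz
    have hz' : z ∉ S := Finset.mem_compl.mp hz
    simp [hz']; ring
  rw [Finset.sum_congr rfl h1, Finset.sum_congr rfl h2,
    ← Finset.sum_mul, ← Finset.sum_mul]
  show mass π S * _ + mass π Sᶜ * _ = _
  ring

lemma lift_smul (π : X → ℝ) (S : Finset X) (c : ℝ) (f : Bool → Bool → ℝ) :
    c • lift π S f = lift π S (fun i j => c * f i j) := by
  ext x y; simp [lift]; ring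

lemma lift_add (π : X → ℝ) (S : Finset X) (f g : Bool → Bool → ℝ) :
    lift π S f + lift π S g = lift π S (fun i j => f i j + g i j) := by
  ext x y; simp [lift]; ring

lemma lift_sub (π : X → ℝ) (S : Finset X) (f g : Bool → Bool → ℝ) :
    lift π S f - lift π S g = lift π S (fun i j => f i j - g i j) := by
  ext x y; simp [lift]; ring

lemma pimat_eq_lift (π : X → ℝ) (S : Finset X) :
    Pimat π = lift π S (fun _ _ => 1) := by
  ext x y; simp [Pimat, lift]

lemma trace_lift (π : X → ℝ) (S : Finset X) (f : Bool → Bool → ℝ) :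
    Matrix.trace (lift π S f) = mass π S * f true true + mass π Sᶜ * f false false := by
  simp only [Matrix.trace, Matrix.diag, lift, Matrix.of_apply]
  rw [← Finset.sum_add_sum_compl S]
  have h1 : ∀ z ∈ S, π z * f (decide (z ∈ S)) (decide (z ∈ S)) = π z * f true true := by
    intro z hz; simp [hz]
  have h2 : ∀ z ∈ Sᶜ, π z * f (decide (z ∈ S)) (decide (z ∈ S)) = π z * f false false := by
    intro z hz; have hz' : z ∉ S := Finset.mem_compl.mp hz; simp [hz']
  rw [Finset.sum_congr rfl h1, Finset.sum_congr rfl h2, ← Finset.sum_mul, ← Finset.sum_mul]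
  rfl

lemma piAdj_lift (π : X → ℝ) (hπ : ∀ x, 0 < π x) (S : Finset X) (f : Bool → Bool → ℝ) :
    piAdj π (lift π S f) = lift π S (fun i j => f j i) := by
  ext x y
  simp only [piAdj, lift, Matrix.of_apply]
  rw [mul_comm (π x), ← mul_assoc, mul_div_assoc, div_self (hπ x).ne', mul_one]

def kfun (m0 m1 : ℝ) : Bool → Bool → ℝ := fun i j =>
  if i then (if j then m1 / m0 else -1) else (if j then -1 else m0 / m1)

lemma lift_zero (π : X → ℝ) (S : Finset X) : lift π S (fun _ _ => (0:ℝ)) = 0 := by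
  ext x y; simp [lift]

lemma sum_split_ite (S : Finset X) (F G : X → ℝ) :
    ∑ w, (if w ∈ S then F w else G w) = ∑ w ∈ S, F w + ∑ w ∈ Sᶜ, G w := by
  rw [← Finset.sum_add_sum_compl S]
  congr 1
  · exact Finset.sum_congr rfl fun w hw => if_pos hw
  · exact Finset.sum_congr rfl fun w hw => if_neg (Finset.mem_compl.mp hw)

end AuxGpg

/-- λ₂(P̄) (the second eigenvalue of the 2×2 projection chain, i.e.
Tr(P̄) − 1 since the other eigenvalue is 1) equals 1 − (1/(π(S)π(S')))Σ π(x)P(x,y),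
and ‖(G_S P G_S)^l − Π‖²_{F,π} = λ₂(P̄)^{2l}. -/
theorem stmt12 [Fintype X] [DecidableEq X] (π : X → ℝ)
    (hπ : ∀ x, 0 < π x) (hsum : ∑ x, π x = 1)
    (P : Matrix X X ℝ) (hP : IsReversible π P)
    (S : Finset X) (hS : S ≠ ∅) (hS' : S ≠ Finset.univ) :
    Matrix.trace (projChain π (twoBlock S) P) - 1
      = 1 - (1 / (mass π S * mass π Sᶜ)) * ∑ x ∈ S, ∑ y ∈ Sᶜ, π x * P x y ∧
    ∀ l : ℕ, 0 < l →
      frobSq π ((gibbsTwo π S * P * gibbsTwo π S) ^ l - Pimat π)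
        = (Matrix.trace (projChain π (twoBlock S) P) - 1) ^ (2 * l) := by
  obtain ⟨⟨hPnn, hProw⟩, hrev⟩ := hP
  have hm0 : 0 < mass π S := Finset.sum_pos (fun x _ => hπ x) (Finset.nonempty_of_ne_empty hS)
  have hm1 : 0 < mass π Sᶜ := Finset.sum_pos (fun x _ => hπ x) (by
    rw [Finset.nonempty_iff_ne_empty]
    simpa [Finset.compl_eq_empty_iff] using hS')
  have hms : mass π S + mass π Sᶜ = 1 := by
    rw [mass, mass, Finset.sum_add_sum_compl]; exact hsum
  set C := ∑ x ∈ S, ∑ y ∈ Sᶜ, π x * P x y with hC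
  set lam := 1 - 1 / (mass π S * mass π Sᶜ) * C with hlam
  have hrowS : ∀ (A : Finset X), ∑ z ∈ A, ∑ w ∈ S, π z * P z w
      + ∑ z ∈ A, ∑ w ∈ Sᶜ, π z * P z w = mass π A := by
    intro A
    rw [← Finset.sum_add_distrib]
    refine Finset.sum_congr rfl fun z _ => ?_
    rw [Finset.sum_add_sum_compl, ← Finset.mul_sum, hProw z, mul_one]
  have hSS : ∑ z ∈ S, ∑ w ∈ S, π z * P z w = mass π S - C := by
    have := hrowS S; linarith
  have hcS : ∑ z ∈ Sᶜ, ∑ w ∈ S, π z * P z w = C := by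
    rw [Finset.sum_comm, hC]
    exact Finset.sum_congr rfl fun w _ => Finset.sum_congr rfl fun z _ => hrev z w
  have hcc : ∑ z ∈ Sᶜ, ∑ w ∈ Sᶜ, π z * P z w = mass π Sᶜ - C := by
    have := hrowS Sᶜ; linarith [hcS]
  -- PART 1
  have hf0 : Finset.filter (fun x => twoBlock S x = 0) Finset.univ = S := by
    ext x; by_cases h : x ∈ S <;> simp [twoBlock, h]
  have hf1 : Finset.filter (fun x => twoBlock S x = 1) Finset.univ = Sᶜ := by
    ext x; by_cases h : x ∈ S <;> simp [twoBlock, h]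
  have part1 : Matrix.trace (projChain π (twoBlock S) P) - 1 = lam := by
    have htr : Matrix.trace (projChain π (twoBlock S) P)
        = (1 / mass π S) * (mass π S - C) + (1 / mass π Sᶜ) * (mass π Sᶜ - C) := by
      rw [Matrix.trace, Fin.sum_univ_two]
      show projChain π (twoBlock S) P 0 0 + projChain π (twoBlock S) P 1 1 = _
      simp only [projChain, Matrix.of_apply, orbMass, hf0, hf1]
      rw [hSS, hcc]; rfl
    rw [htr, hlam]
    field_simp
    linear_combination (-C) * hms
  refine ⟨part1, ?_⟩
  have e : mass π Sᶜ = 1 - mass π S := by linarith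
  have hm1' : (1:ℝ) - mass π S ≠ 0 := by rw [← e]; exact hm1.ne'
  have trans : ∀ (A B : Finset X) (a c : ℝ),
      ∑ w ∈ B, (∑ z ∈ A, π z / a * P z w) * c
        = (∑ z ∈ A, ∑ w ∈ B, π z * P z w) * (c / a) := by
    intro A B a c
    simp only [Finset.sum_mul]
    rw [Finset.sum_comm]
    exact Finset.sum_congr rfl fun w _ => Finset.sum_congr rfl fun z _ => by ring
  have hA : gibbsTwo π S * P * gibbsTwo π S
      = Pimat π + lam • lift π S (kfun (mass π S) (mass π Sᶜ)) := by
    ext x y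
    simp only [Matrix.mul_apply, gibbsTwo, Matrix.of_apply, Matrix.add_apply,
      Matrix.smul_apply, smul_eq_mul, Pimat, lift]
    by_cases hx : x ∈ S <;> by_cases hy : y ∈ S
    · simp only [hx, hy, if_true, ite_mul, zero_mul, mul_ite, mul_zero,
        sum_split_ite, Finset.sum_const_zero, add_zero, zero_add,
        decide_true, kfun, ite_true]
      rw [trans S S (mass π S) (π y / mass π S), hSS, hlam, e]
      field_simp
      ring
    · simp only [hx, hy, if_true, if_false, ite_mul, zero_mul, mul_ite, mul_zero,
        sum_split_ite, Finset.sum_const_zero, add_zero, zero_add,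
        decide_true, decide_false, kfun, ite_true, ite_false, Bool.false_eq_true, reduceIte]
      rw [trans S Sᶜ (mass π S) (π y / mass π Sᶜ), hlam, e]
      field_simp
      ring
    · simp only [hx, hy, if_true, if_false, ite_mul, zero_mul, mul_ite, mul_zero,
        sum_split_ite, Finset.sum_const_zero, add_zero, zero_add,
        decide_true, decide_false, kfun, ite_true, ite_false, Bool.false_eq_true, reduceIte]
      rw [trans Sᶜ S (mass π Sᶜ) (π y / mass π S), hcS, hlam, e]
      field_simp
      ring
    · simp only [hx, hy, if_true, if_false, ite_mul, zero_mul, mul_ite, mul_zero,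
        sum_split_ite, Finset.sum_const_zero, add_zero, zero_add,
        decide_true, decide_false, kfun, ite_true, ite_false, Bool.false_eq_true, reduceIte]
      rw [trans Sᶜ Sᶜ (mass π Sᶜ) (π y / mass π Sᶜ), hcc, hlam, e]
      field_simp
      ring
  have hK2 : lift π S (kfun (mass π S) (mass π Sᶜ)) * lift π S (kfun (mass π S) (mass π Sᶜ))
      = lift π S (kfun (mass π S) (mass π Sᶜ)) := by
    rw [lift_mul]
    refine congrArg (lift π S) (funext fun i => funext fun j => ?_)
    cases i <;> cases j <;> simp only [comp2, kfun] <;> norm_num <;>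
      rw [e] <;> field_simp <;> ring
  have hPiPi : Pimat π * Pimat π = (Pimat π : Matrix X X ℝ) := by
    rw [pimat_eq_lift π S, lift_mul]
    refine congrArg (lift π S) (funext fun i => funext fun j => ?_)
    simp only [comp2]
    linarith
  have hPiK : Pimat π * lift π S (kfun (mass π S) (mass π Sᶜ)) = 0 := by
    rw [pimat_eq_lift π S, lift_mul, ← lift_zero π S]
    refine congrArg (lift π S) (funext fun i => funext fun j => ?_)
    cases j <;> simp only [comp2, kfun] <;> norm_num <;> rw [e] <;> field_simp <;> ring
  have hKPi : lift π S (kfun (mass π S) (mass π Sᶜ)) * Pimat π = 0 := by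
    rw [pimat_eq_lift π S, lift_mul, ← lift_zero π S]
    refine congrArg (lift π S) (funext fun i => funext fun j => ?_)
    cases i <;> simp only [comp2, kfun] <;> norm_num <;> rw [e] <;> field_simp <;> ring
  have hpow : ∀ n : ℕ, (gibbsTwo π S * P * gibbsTwo π S) ^ (n + 1)
      = Pimat π + lam ^ (n + 1) • lift π S (kfun (mass π S) (mass π Sᶜ)) := by
    intro n
    induction n with
    | zero => rw [pow_one, pow_one, hA]
    | succ n ih =>
      rw [pow_succ, ih, hA, add_mul, mul_add, mul_add, hPiPi, mul_smul_comm, hPiK,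
        smul_zero, add_zero, smul_mul_assoc, hKPi, smul_zero, zero_add,
        smul_mul_assoc, mul_smul_comm, hK2, smul_smul, ← pow_succ]
  intro l hl
  obtain ⟨n, rfl⟩ : ∃ n, l = n + 1 := ⟨l - 1, (Nat.succ_pred_eq_of_pos hl).symm⟩
  rw [part1, hpow n, add_sub_cancel_left, lift_smul, frobSq, piAdj_lift π hπ S,
    lift_mul, trace_lift]
  simp only [comp2, kfun]
  norm_num
  rw [e, show 2 * (n + 1) = (n + 1) + (n + 1) from by ring, pow_add]
  field_simp
  ring


end
end GpgStmt
end
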